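/- Fix n ≥ 1 and consider the Kruskal–Zabusky discretization of KdV: the ODE system on ℝ^{ℤ/nℤ} given by u̇_i = (u_{i+1} + u_i + u_{i−1})(u_{i+1} − u_{i−1}) − (u_{i+2} − 2u_{i+1} + 2u_{i−1} − u_{i−2}), indices taken mod n. If u : ℝ → ℝ^{ℤ/nℤ} is differentiable and satisfies this system for all t, then Σ_{i ∈ ℤ/nℤ} u_i(t)² is independent of t. -/

import Mathlib

lemma zmod_shift (n : ℕ) [NeZero n] (c : ZMod n) (f : ZMod n → ℝ) :
    ∑ i : ZMod n, f (i + c) = ∑ i : ZMod n, f i :=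
  Fintype.sum_equiv (Equiv.addRight c) _ _ (fun _ => rfl)

lemma kz_key (n : ℕ) [NeZero n] (v : ZMod n → ℝ) :
    ∑ i : ZMod n, v i * ((v (i + 1) + v i + v (i - 1)) * (v (i + 1) - v (i - 1))
        - (v (i + 2) - 2 * v (i + 1) + 2 * v (i - 1) - v (i - 2))) = 0 := by
  obtain ⟨g1, hg1⟩ : ∃ g : ZMod n → ℝ,
      g = fun j => v j * v (j + 1) * (v j + v (j + 1)) + 2 * (v j * v (j + 1)) := ⟨_, rfl⟩
  obtain ⟨g2, hg2⟩ : ∃ g : ZMod n → ℝ, g = fun j => v j * v (j + 2) := ⟨_, rfl⟩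
  have h : ∀ i : ZMod n,
      v i * ((v (i + 1) + v i + v (i - 1)) * (v (i + 1) - v (i - 1))
        - (v (i + 2) - 2 * v (i + 1) + 2 * v (i - 1) - v (i - 2)))
      = (g1 i - g1 (i + (-1))) + (g2 (i + (-2)) - g2 i) := by
    intro i
    have h1 : i - 1 = i + (-1) := by ring
    have h2 : i - 2 = i + (-2) := by ring
    have h3 : i + (-1) + 1 = i := by ring
    have h4 : i + (-2) + 2 = i := by ring
    simp only [hg1, hg2, h1, h2, h3, h4]
    ring
  rw [Finset.sum_congr rfl (fun i _ => h i), Finset.sum_add_distrib,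
    Finset.sum_sub_distrib, Finset.sum_sub_distrib,
    zmod_shift n (-1) g1, zmod_shift n (-2) g2]
  ring

/-- The Kruskal–Zabusky discretization of KdV conserves `Σᵢ uᵢ²`. -/
theorem kruskal_zabusky_conserves_sum_sq
    (n : ℕ) [NeZero n]
    (u : ℝ → ZMod n → ℝ)
    (hu : ∀ (t : ℝ) (i : ZMod n), HasDerivAt (fun s => u s i)
      ((u t (i + 1) + u t i + u t (i - 1)) * (u t (i + 1) - u t (i - 1))
        - (u t (i + 2) - 2 * u t (i + 1) + 2 * u t (i - 1) - u t (i - 2))) t) :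
    ∀ t₁ t₂ : ℝ,
      ∑ i : ZMod n, (u t₁ i) ^ 2 = ∑ i : ZMod n, (u t₂ i) ^ 2 := by
  intro t₁ t₂
  have hF : ∀ t : ℝ, HasDerivAt (fun s => ∑ i : ZMod n, (u s i) ^ 2) 0 t := by
    intro t
    have H : HasDerivAt (fun s => ∑ i : ZMod n, (u s i) ^ 2)
        (∑ i : ZMod n, 2 * u t i ^ 1 *
          ((u t (i + 1) + u t i + u t (i - 1)) * (u t (i + 1) - u t (i - 1))
            - (u t (i + 2) - 2 * u t (i + 1) + 2 * u t (i - 1) - u t (i - 2)))) t := by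
      apply HasDerivAt.fun_sum
      intro i _
      simpa using (hu t i).fun_pow 2
    convert H using 1
    rw [eq_comm, Finset.sum_congr rfl (fun i _ => by ring :
      ∀ i ∈ Finset.univ, 2 * u t i ^ 1 *
          ((u t (i + 1) + u t i + u t (i - 1)) * (u t (i + 1) - u t (i - 1))
            - (u t (i + 2) - 2 * u t (i + 1) + 2 * u t (i - 1) - u t (i - 2)))
        = 2 * (u t i * ((u t (i + 1) + u t i + u t (i - 1)) * (u t (i + 1) - u t (i - 1))
            - (u t (i + 2) - 2 * u t (i + 1) + 2 * u t (i - 1) - u t (i - 2))))),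
      ← Finset.mul_sum, kz_key n (u t), mul_zero]
  exact is_const_of_deriv_eq_zero (f := fun s => ∑ i : ZMod n, (u s i) ^ 2)
    (fun t => (hF t).differentiableAt) (fun t => (hF t).deriv) t₁ t₂
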